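/- Let X be a set, I a nonempty finite set, and (f_i)_{i∈I} a family of functions f_i : X → X having attractor A. Then for every infinite word α ∈ Λ(I), ⋂_{n∈ℕ} Y_{[α]_n} = {a_α}. -/

import Mathlib

open Filter Topology Set

/-- `φ : [0,∞) → [0,∞)` is a comparison function: it maps `[0,∞)` into `[0,∞)`,
is increasing, satisfies `φ t < t` for `t > 0`, and is right-continuous. -/
def IsComparisonFn (φ : ℝ → ℝ) : Prop :=
  (∀ t : ℝ, 0 ≤ t → 0 ≤ φ t) ∧
  MonotoneOn φ (Set.Ici (0 : ℝ)) ∧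
  (∀ t : ℝ, 0 < t → φ t < t) ∧
  (∀ t : ℝ, 0 ≤ t → ContinuousWithinAt φ (Set.Ici t) t)

/-- `f_{α₁…αₙ} = f_{α₁} ∘ f_{α₂} ∘ … ∘ f_{αₙ}` (the identity for the empty word). -/
def WordMap {X I : Type*} (f : I → X → X) : List I → X → X
  | [] => id
  | i :: w => f i ∘ WordMap f w

/-- `[α]_n`: the finite word consisting of the first `n` letters of the infinite word `α`. -/
def Pref {I : Type*} (α : ℕ → I) (n : ℕ) : List I := List.ofFn (fun k : Fin n => α (k : ℕ))

/-- `X_w = f_w(X)`, the image of the whole space under the word map. -/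
def WordSet {X I : Type*} (f : I → X → X) (w : List I) : Set X := Set.range (WordMap f w)

/-- A family `(f_i)_{i ∈ I}` of self-maps of `X` has attractor if:
(a) for every infinite word `α`, `⋂ₙ X_{[α]ₙ}` has a unique element `a_α`;
(b) whenever `a_α ≠ a_β`, some `X_{[α]_{n₀}}` and `X_{[β]_{n₀}}` are disjoint. -/
def HasAttractor {X I : Type*} (f : I → X → X) : Prop :=
  (∀ α : ℕ → I, ∃! a : X, ∀ n : ℕ, a ∈ WordSet f (Pref α n)) ∧
  (∀ α β : ℕ → I, ∀ a b : X,
    (∀ n : ℕ, a ∈ WordSet f (Pref α n)) → (∀ n : ℕ, b ∈ WordSet f (Pref β n)) →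
    a ≠ b →
    ∃ n₀ : ℕ, WordSet f (Pref α n₀) ∩ WordSet f (Pref β n₀) = ∅)

/-- Given a selection `a` of the points `a_β`,
`Y_w = {a_β : β ∈ Λ(I), X_w ∩ X_{[β]ₙ} ≠ ∅ for every n}`. -/
def YSet {X I : Type*} (f : I → X → X) (a : (ℕ → I) → X) (w : List I) : Set X :=
  {y | ∃ β : ℕ → I, y = a β ∧ ∀ n : ℕ, (WordSet f w ∩ WordSet f (Pref β n)).Nonempty}

/-- `X̃_w = X_w ∪ Y_w`. -/
def XtSet {X I : Type*} (f : I → X → X) (a : (ℕ → I) → X) (w : List I) : Set X :=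
  WordSet f w ∪ YSet f a w

private lemma wordMap_append {X I : Type*} (f : I → X → X) (w v : List I) :
    WordMap f (w ++ v) = WordMap f w ∘ WordMap f v := by
  induction w with
  | nil => rfl
  | cons i w ih =>
    show f i ∘ WordMap f (w ++ v) = (f i ∘ WordMap f w) ∘ WordMap f v
    rw [ih, Function.comp_assoc]

private lemma wordSet_append_subset {X I : Type*} (f : I → X → X) (w v : List I) :
    WordSet f (w ++ v) ⊆ WordSet f w := by
  rw [WordSet, wordMap_append]
  exact Set.range_comp_subset_range _ _

private lemma pref_succ {I : Type*} (α : ℕ → I) (n : ℕ) :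
    Pref α (n + 1) = Pref α n ++ [α n] := by
  rw [Pref, List.ofFn_succ', List.concat_eq_append]
  simp [Pref]

private lemma pref_exists_append {I : Type*} (α : ℕ → I) {k n : ℕ} (h : k ≤ n) :
    ∃ u, Pref α n = Pref α k ++ u := by
  induction n, h using Nat.le_induction with
  | base => exact ⟨[], by simp⟩
  | succ n hk ih =>
    obtain ⟨u, hu⟩ := ih
    exact ⟨u ++ [α n], by rw [pref_succ, hu, List.append_assoc]⟩

private lemma wordSet_pref_mono {X I : Type*} (f : I → X → X) (α : ℕ → I) {k n : ℕ}
    (h : k ≤ n) : WordSet f (Pref α n) ⊆ WordSet f (Pref α k) := by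
  obtain ⟨u, hu⟩ := pref_exists_append α h
  rw [hu]; exact wordSet_append_subset f _ _

/-- A word `w` is good (w.r.t. `α` and `y`) if `y ∈ X_w` and `X_w` meets `X_{[α]_{|w|}}`. -/
private def Good {X I : Type*} (f : I → X → X) (α : ℕ → I) (y : X) (w : List I) : Prop :=
  y ∈ WordSet f w ∧ (WordSet f w ∩ WordSet f (Pref α w.length)).Nonempty

/-- `w` has good extensions of every length. -/
private def GoodT {X I : Type*} (f : I → X → X) (α : ℕ → I) (y : X) (w : List I) : Prop :=
  ∀ k : ℕ, ∃ v : List I, v.length = k ∧ Good f α y (w ++ v)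

private lemma good_prefix {X I : Type*} {f : I → X → X} {α : ℕ → I} {y : X} {w v : List I}
    (h : Good f α y (w ++ v)) : Good f α y w := by
  obtain ⟨h1, x, hx1, hx2⟩ := h
  refine ⟨wordSet_append_subset f w v h1, x, wordSet_append_subset f w v hx1, ?_⟩
  exact wordSet_pref_mono f α (by simp) hx2

private lemma goodT_step {X I : Type*} [Finite I] {f : I → X → X} {α : ℕ → I} {y : X}
    {w : List I} (hw : GoodT f α y w) : ∃ i : I, GoodT f α y (w ++ [i]) := by
  have hv : ∀ k : ℕ, ∃ v : List I, v.length = k + 1 ∧ Good f α y (w ++ v) :=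
    fun k => hw (k + 1)
  choose v hlen hgood using hv
  have hne : ∀ k, v k ≠ [] := by
    intro k h
    have := hlen k; rw [h] at this; simp at this
  obtain ⟨i, hi⟩ := Finite.exists_infinite_fiber (fun k => (v k).head (hne k))
  rw [Set.infinite_coe_iff] at hi
  refine ⟨i, fun k => ?_⟩
  obtain ⟨k', hk'mem, hk'⟩ := hi.exists_gt k
  have hhead : (v k').head (hne k') = i := hk'mem
  have hcons : v k' = i :: (v k').tail := by
    conv_lhs => rw [← List.cons_head_tail (hne k')]
    rw [hhead]
  have htl : (v k').tail.length = k' := by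
    have h := hlen k'
    rw [hcons] at h; simpa using h
  refine ⟨(v k').tail.take k, by simp [htl, le_of_lt hk'], ?_⟩
  have heq : w ++ v k' = (w ++ [i] ++ (v k').tail.take k) ++ (v k').tail.drop k := by
    rw [List.append_assoc (w ++ [i]), List.take_append_drop, List.append_assoc]
    rw [hcons]; rfl
  have hg := hgood k'
  rw [heq] at hg
  exact good_prefix hg

/-- **Proposition 3.6 e).** `⋂ₙ Y_{[α]ₙ} = {a_α}` for every infinite word `α`. -/
theorem iInter_YSet_eq_singleton {X I : Type*} [Finite I] [Nonempty I]
    (f : I → X → X) (hF : HasAttractor f)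
    (a : (ℕ → I) → X) (ha : ∀ (α : ℕ → I) (n : ℕ), a α ∈ WordSet f (Pref α n)) :
    ∀ α : ℕ → I, ⋂ n : ℕ, YSet f a (Pref α n) = {a α} := by
  intro α
  ext y
  simp only [Set.mem_iInter, Set.mem_singleton_iff]
  constructor
  · intro hy
    -- base: the empty word has good extensions of every length
    have h0 : GoodT f α y [] := by
      intro k
      obtain ⟨β, hyβ, hβ⟩ := hy k
      refine ⟨Pref β k, List.length_ofFn, ?_, ?_⟩
      · rw [List.nil_append, hyβ]; exact ha β k
      · obtain ⟨x, hx1, hx2⟩ := hβ k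
        rw [List.nil_append]
        refine ⟨x, hx2, ?_⟩
        rw [show (Pref β k).length = k from List.length_ofFn]
        exact hx1
    -- build the branch
    have step : ∀ p : {w : List I // GoodT f α y w},
        GoodT f α y (p.1 ++ [Classical.choose (goodT_step p.2)]) :=
      fun p => Classical.choose_spec (goodT_step p.2)
    let F : {w : List I // GoodT f α y w} → {w : List I // GoodT f α y w} :=
      fun p => ⟨p.1 ++ [Classical.choose (goodT_step p.2)], step p⟩
    let ws : ℕ → {w : List I // GoodT f α y w} := fun n => F^[n] ⟨[], h0⟩
    let γ : ℕ → I := fun n => Classical.choose (goodT_step (ws n).2)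
    have hws : ∀ n, (ws n).1 = Pref γ n := by
      intro n
      induction n with
      | zero => simp [ws, Pref]
      | succ n ih =>
        have h1 : ws (n + 1) = F (ws n) := by
          show F^[n + 1] _ = _
          rw [Function.iterate_succ_apply']
        have h2 : (ws (n + 1)).1 = (ws n).1 ++ [γ n] := by rw [h1]
        rw [h2, ih, pref_succ]
    have hgood : ∀ n, Good f α y (Pref γ n) := by
      intro n
      obtain ⟨v, hv, hgv⟩ := (ws n).2 0
      rw [List.length_eq_zero_iff] at hv
      subst hv
      rw [List.append_nil, hws n] at hgv
      exact hgv
    have hyin : ∀ n, y ∈ WordSet f (Pref γ n) := fun n => (hgood n).1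
    have hnonempty : ∀ n, (WordSet f (Pref γ n) ∩ WordSet f (Pref α n)).Nonempty := by
      intro n
      have h := (hgood n).2
      simpa [Pref, List.length_ofFn] using h
    obtain ⟨c, _, hcu⟩ := hF.1 γ
    have h1 : y = c := hcu y hyin
    have h2 : a γ = c := hcu (a γ) (ha γ)
    by_cases hne : a γ = a α
    · rw [h1, ← h2, hne]
    · obtain ⟨n₀, hd⟩ := hF.2 γ α (a γ) (a α) (ha γ) (ha α) hne
      exact absurd hd (hnonempty n₀).ne_empty
  · rintro rfl n
    exact ⟨α, rfl, fun m => ⟨a α, ha α n, ha α m⟩⟩
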